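/- arXiv:2005.14027 — 3 statements merged into one kernel-verified Lean document; each statement's English description precedes it below -/
import Mathlib

section
/- Let d ≥ 1 and Λ′ ⊆ ℝ^d with Λ′ = −Λ′. Let u = (u₁, …, u_d) be a finitely supported vector field on Λ′ with values in ℂ^d such that each component satisfies the reality condition and u is divergence-free, i.e. Σ_{j=1}^d k_j u_j(k) = 0 for every k ∈ Λ′, and let p : Λ′ → ℂ be finitely supported satisfying the reality condition. Then the energy balance identity holds: Σ_{k ∈ Λ′} Σ_{i=1}^d [ (Σ_{j=1}^d u_j ∗ ∂_j u_i)(k) + i·k_i·p(k) ] · conj(u_i(k)) = 0. In particular, for solutions of the incompressible Euler equations on the lattice the energy E = ½(u, u) is conserved in time. -/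
open scoped Classical

/-- The convolution product on a lattice `Λ ⊆ ℝ^d`:
`(f ∗ g)(k) = Σ_{p,q ∈ Λ, p+q=k} f(p) g(q)`. -/
noncomputable def latticeConv {d : ℕ} (Λ : Set (Fin d → ℝ))
    (f g : (Fin d → ℝ) → ℂ) (k : Fin d → ℝ) : ℂ :=
  ∑ᶠ p ∈ Λ, ∑ᶠ q ∈ Λ, if p + q = k then f p * g q else 0

/-- The reality condition `f(−k) = conj(f(k))`. -/
def RealityCond {d : ℕ} (f : (Fin d → ℝ) → ℂ) : Prop := ∀ k, f (-k) = star (f k)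

/-- The `j`-th lattice derivative `∂_j f(k) = i k_j f(k)`. -/
noncomputable def latticeDeriv {d : ℕ} (j : Fin d) (f : (Fin d → ℝ) → ℂ) :
    (Fin d → ℝ) → ℂ := fun k => Complex.I * (k j : ℂ) * f k

/-- Swap the outermost and innermost of three nested sums. -/
lemma sum3_rotate {M α β γ : Type*} [AddCommMonoid M]
    (s : Finset α) (t : Finset β) (v : Finset γ) (f : α → β → γ → M) :
    ∑ x ∈ s, ∑ y ∈ t, ∑ z ∈ v, f x y z = ∑ z ∈ v, ∑ y ∈ t, ∑ x ∈ s, f x y z := by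
  calc ∑ x ∈ s, ∑ y ∈ t, ∑ z ∈ v, f x y z
      = ∑ y ∈ t, ∑ x ∈ s, ∑ z ∈ v, f x y z := Finset.sum_comm
    _ = ∑ y ∈ t, ∑ z ∈ v, ∑ x ∈ s, f x y z :=
        Finset.sum_congr rfl fun y _ => Finset.sum_comm
    _ = ∑ z ∈ v, ∑ y ∈ t, ∑ x ∈ s, f x y z := Finset.sum_comm

/-- Move the two outer sums of four nested sums inside. -/
lemma sum4_comm {M α β γ δ : Type*} [AddCommMonoid M]
    (s : Finset α) (t : Finset β) (v : Finset γ) (w : Finset δ)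
    (f : α → β → γ → δ → M) :
    ∑ x ∈ s, ∑ y ∈ t, ∑ z ∈ v, ∑ r ∈ w, f x y z r
      = ∑ z ∈ v, ∑ r ∈ w, ∑ x ∈ s, ∑ y ∈ t, f x y z r := by
  calc ∑ x ∈ s, ∑ y ∈ t, ∑ z ∈ v, ∑ r ∈ w, f x y z r
      = ∑ x ∈ s, ∑ z ∈ v, ∑ y ∈ t, ∑ r ∈ w, f x y z r :=
        Finset.sum_congr rfl fun x _ => Finset.sum_comm
    _ = ∑ z ∈ v, ∑ x ∈ s, ∑ y ∈ t, ∑ r ∈ w, f x y z r := Finset.sum_comm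
    _ = ∑ z ∈ v, ∑ x ∈ s, ∑ r ∈ w, ∑ y ∈ t, f x y z r :=
        Finset.sum_congr rfl fun z _ => Finset.sum_congr rfl fun x _ => Finset.sum_comm
    _ = ∑ z ∈ v, ∑ r ∈ w, ∑ x ∈ s, ∑ y ∈ t, f x y z r :=
        Finset.sum_congr rfl fun z _ => Finset.sum_comm

/-- Energy balance identity on a generalized lattice `Λ′ = −Λ′ ⊆ ℝ^d`: for a
finitely supported, divergence-free vector field `u` and a pressure `p`, both
satisfying the reality condition,
`Σ_k Σ_i [ (Σ_j u_j ∗ ∂_j u_i)(k) + i k_i p(k) ] conj(u_i(k)) = 0`.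
In particular, the energy `E = ½(u,u)` is conserved for solutions of the
incompressible Euler equations on the lattice. -/
theorem euler_energy_balance (d : ℕ) (hd : 1 ≤ d)
    (Λ : Set (Fin d → ℝ)) (hΛ : Λ = -Λ)
    (u : Fin d → (Fin d → ℝ) → ℂ) (p : (Fin d → ℝ) → ℂ)
    (hufin : ∀ i, (Function.support (u i)).Finite)
    (husupp : ∀ i, Function.support (u i) ⊆ Λ)
    (hureal : ∀ i, RealityCond (u i))
    (hdiv : ∀ k ∈ Λ, ∑ j, (k j : ℂ) * u j k = 0)
    (hpfin : (Function.support p).Finite)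
    (hpsupp : Function.support p ⊆ Λ)
    (hpreal : RealityCond p) :
    ∑ᶠ k ∈ Λ, ∑ i,
      ((∑ j, latticeConv Λ (u j) (latticeDeriv j (u i)) k) +
        Complex.I * (k i : ℂ) * p k) * star (u i k) = 0 := by
  classical
  have hsfin : (⋃ i, Function.support (u i)).Finite := Set.finite_iUnion hufin
  set T : Finset (Fin d → ℝ) := hsfin.toFinset with hTdef
  have hmemT : ∀ (i : Fin d) (k : Fin d → ℝ), u i k ≠ 0 → k ∈ T := by
    intro i k hk
    simp only [hTdef, Set.Finite.mem_toFinset, Set.mem_iUnion, Function.mem_support]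
    exact ⟨i, hk⟩
  have hTΛ : ∀ k ∈ T, k ∈ Λ := by
    intro k hk
    simp only [hTdef, Set.Finite.mem_toFinset, Set.mem_iUnion] at hk
    obtain ⟨i, hi⟩ := hk
    exact husupp i hi
  have hTneg : ∀ k ∈ T, -k ∈ T := by
    intro k hk
    simp only [hTdef, Set.Finite.mem_toFinset, Set.mem_iUnion, Function.mem_support] at hk ⊢
    obtain ⟨i, hi⟩ := hk
    refine ⟨i, ?_⟩
    rw [hureal i k]
    simpa using hi
  have hnegΛ : ∀ k ∈ Λ, -k ∈ Λ := by
    intro k hk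
    rw [hΛ, Set.mem_neg]
    simpa using hk
  have hstar : ∀ i k, star (u i k) = u i (-k) := fun i k => (hureal i k).symm
  have hdivT : ∀ k ∈ T, ∑ j, (k j : ℂ) * u j k = 0 := fun k hk => hdiv k (hTΛ k hk)
  have hdivneg : ∀ k ∈ Λ, ∑ i, (k i : ℂ) * u i (-k) = 0 := by
    intro k hk
    have h := hdiv (-k) (hnegΛ k hk)
    have h2 : ∑ j, ((-k) j : ℂ) * u j (-k) = -∑ j, (k j : ℂ) * u j (-k) := by
      rw [← Finset.sum_neg_distrib]
      refine Finset.sum_congr rfl fun j _ => ?_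
      simp [Pi.neg_apply]
    rw [h2] at h
    exact neg_eq_zero.mp h
  have hTsub : (↑T : Set (Fin d → ℝ)) ⊆ Λ := fun x hx => hTΛ x hx
  -- reduce the convolution to finite sums over T
  have conv_red : ∀ (i j : Fin d) (k : Fin d → ℝ),
      latticeConv Λ (u j) (latticeDeriv j (u i)) k
        = ∑ q1 ∈ T, ∑ q2 ∈ T,
            (if q1 + q2 = k then u j q1 * (Complex.I * ((q2 j : ℝ) : ℂ) * u i q2) else 0) := by
    intro i j k
    unfold latticeConv latticeDeriv
    have hinner : ∀ q1, (∑ᶠ q2 ∈ Λ, if q1 + q2 = k then u j q1 * (Complex.I * ((q2 j : ℝ) : ℂ) * u i q2) else 0)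
        = ∑ q2 ∈ T, if q1 + q2 = k then u j q1 * (Complex.I * ((q2 j : ℝ) : ℂ) * u i q2) else 0 := by
      intro q1
      apply finsum_mem_eq_sum_of_inter_support_eq
      have hs : Function.support (fun q2 => if q1 + q2 = k then u j q1 * (Complex.I * ((q2 j : ℝ) : ℂ) * u i q2) else 0) ⊆ ↑T := by
        intro q2 hq
        simp only [Function.mem_support] at hq
        by_contra hqT
        apply hq
        have h0 : u i q2 = 0 := by
          by_contra h0; exact hqT (hmemT i q2 h0)
        simp [h0]
      rw [Set.inter_eq_self_of_subset_right (hs.trans hTsub),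
        Set.inter_eq_self_of_subset_right hs]
    rw [finsum_mem_congr rfl fun q1 _ => hinner q1]
    apply finsum_mem_eq_sum_of_inter_support_eq
    have hs : Function.support (fun q1 => ∑ q2 ∈ T, if q1 + q2 = k then u j q1 * (Complex.I * ((q2 j : ℝ) : ℂ) * u i q2) else 0) ⊆ ↑T := by
      intro q1 hq
      simp only [Function.mem_support] at hq
      by_contra hqT
      apply hq
      have h0 : u j q1 = 0 := by
        by_contra h0; exact hqT (hmemT j q1 h0)
      refine Finset.sum_eq_zero fun q2 _ => ?_
      simp [h0]
    rw [Set.inter_eq_self_of_subset_right (hs.trans hTsub),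
      Set.inter_eq_self_of_subset_right hs]
  -- the body of the main sum
  set F : (Fin d → ℝ) → ℂ := fun k => ∑ i,
      ((∑ j, latticeConv Λ (u j) (latticeDeriv j (u i)) k) +
        Complex.I * ((k i : ℝ) : ℂ) * p k) * star (u i k) with hF
  -- reduce main finsum to a sum over T
  have hmain : (∑ᶠ k ∈ Λ, F k) = ∑ k ∈ T, F k := by
    apply finsum_mem_eq_sum_of_inter_support_eq
    have hs : Function.support F ⊆ ↑T := by
      intro k hk
      simp only [Function.mem_support, hF] at hk
      by_contra hkT
      apply hk
      refine Finset.sum_eq_zero fun i _ => ?_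
      have h0 : u i k = 0 := by
        by_contra h0; exact hkT (hmemT i k h0)
      simp [h0]
    rw [Set.inter_eq_self_of_subset_right (hs.trans hTsub),
      Set.inter_eq_self_of_subset_right hs]
  rw [show (∑ᶠ k ∈ Λ, ∑ i,
      ((∑ j, latticeConv Λ (u j) (latticeDeriv j (u i)) k) +
        Complex.I * ((k i : ℝ) : ℂ) * p k) * star (u i k)) = ∑ᶠ k ∈ Λ, F k from rfl, hmain]
  -- step 2 : rewrite each term as a structured double sum
  have step2 : ∀ k ∈ T, F k
      = ∑ q1 ∈ T, ∑ q2 ∈ T, (if q1 + q2 = k then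
          Complex.I * (∑ j, ((q2 j : ℝ) : ℂ) * u j q1) * (∑ i, u i q2 * u i (-k)) else 0) := by
    intro k hk
    have hkΛ : k ∈ Λ := hTΛ k hk
    have hsplit : F k = (∑ i, (∑ j, latticeConv Λ (u j) (latticeDeriv j (u i)) k) * star (u i k))
        + ∑ i, (Complex.I * ((k i : ℝ) : ℂ) * p k) * star (u i k) := by
      rw [hF, ← Finset.sum_add_distrib]
      exact Finset.sum_congr rfl fun i _ => by ring
    have hpress : (∑ i, (Complex.I * ((k i : ℝ) : ℂ) * p k) * star (u i k)) = 0 := by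
      have : (∑ i, (Complex.I * ((k i : ℝ) : ℂ) * p k) * star (u i k))
          = Complex.I * p k * ∑ i, ((k i : ℝ) : ℂ) * u i (-k) := by
        rw [Finset.mul_sum]
        exact Finset.sum_congr rfl fun i _ => by rw [hstar]; ring
      rw [this, hdivneg k hkΛ, mul_zero]
    rw [hsplit, hpress, add_zero]
    -- now handle the transport term
    calc (∑ i, (∑ j, latticeConv Λ (u j) (latticeDeriv j (u i)) k) * star (u i k))
        = ∑ i, ∑ j, ∑ q1 ∈ T, ∑ q2 ∈ T,
            (if q1 + q2 = k then u j q1 * (Complex.I * ((q2 j : ℝ) : ℂ) * u i q2) * u i (-k) else 0) := by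
          refine Finset.sum_congr rfl fun i _ => ?_
          rw [hstar, Finset.sum_mul]
          refine Finset.sum_congr rfl fun j _ => ?_
          rw [conv_red i j k, Finset.sum_mul]
          refine Finset.sum_congr rfl fun q1 _ => ?_
          rw [Finset.sum_mul]
          refine Finset.sum_congr rfl fun q2 _ => ?_
          rw [ite_mul, zero_mul]
      _ = ∑ q1 ∈ T, ∑ q2 ∈ T, ∑ i, ∑ j,
            (if q1 + q2 = k then u j q1 * (Complex.I * ((q2 j : ℝ) : ℂ) * u i q2) * u i (-k) else 0) :=
          sum4_comm _ _ _ _ _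
      _ = ∑ q1 ∈ T, ∑ q2 ∈ T, (if q1 + q2 = k then
            Complex.I * (∑ j, ((q2 j : ℝ) : ℂ) * u j q1) * (∑ i, u i q2 * u i (-k)) else 0) := by
          refine Finset.sum_congr rfl fun q1 _ => Finset.sum_congr rfl fun q2 _ => ?_
          by_cases hc : q1 + q2 = k
          · simp only [if_pos hc]
            have hrhs : Complex.I * (∑ j, ((q2 j : ℝ) : ℂ) * u j q1) * (∑ i, u i q2 * u i (-k))
                = ∑ j, ∑ i, Complex.I * (((q2 j : ℝ) : ℂ) * u j q1) * (u i q2 * u i (-k)) := by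
              rw [mul_assoc, Finset.sum_mul_sum, Finset.mul_sum]
              refine Finset.sum_congr rfl fun j _ => ?_
              rw [Finset.mul_sum]
              exact Finset.sum_congr rfl fun i _ => (mul_assoc _ _ _).symm
            rw [hrhs, Finset.sum_comm]
            exact Finset.sum_congr rfl fun j _ => Finset.sum_congr rfl fun i _ => by ring
          · simp [if_neg hc]
  rw [Finset.sum_congr rfl step2]
  -- step 3 : substitute k ↦ -k
  have step3 : (∑ k ∈ T, ∑ q1 ∈ T, ∑ q2 ∈ T, (if q1 + q2 = k then
          Complex.I * (∑ j, ((q2 j : ℝ) : ℂ) * u j q1) * (∑ i, u i q2 * u i (-k)) else 0))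
      = ∑ r ∈ T, ∑ q1 ∈ T, ∑ q2 ∈ T, (if q1 + q2 + r = 0 then
          Complex.I * (∑ j, ((q2 j : ℝ) : ℂ) * u j q1) * (∑ i, u i q2 * u i r) else 0) := by
    refine Finset.sum_nbij' (fun k => -k) (fun r => -r) (fun k hkk => hTneg k hkk)
      (fun r hr => hTneg r hr) (fun k _ => neg_neg k) (fun r _ => neg_neg r) ?_
    intro k _
    refine Finset.sum_congr rfl fun q1 _ => Finset.sum_congr rfl fun q2 _ => ?_
    rw [if_congr (Iff.symm add_neg_eq_zero) rfl rfl]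
  rw [step3]
  -- step 4 : symmetrization
  set G : (Fin d → ℝ) → (Fin d → ℝ) → (Fin d → ℝ) → ℂ := fun r q1 q2 =>
      if q1 + q2 + r = 0 then
        Complex.I * (∑ j, ((q2 j : ℝ) : ℂ) * u j q1) * (∑ i, u i q2 * u i r) else 0 with hG
  have hswap : (∑ r ∈ T, ∑ q1 ∈ T, ∑ q2 ∈ T, G r q1 q2)
      = ∑ r ∈ T, ∑ q1 ∈ T, ∑ q2 ∈ T, G q2 q1 r := sum3_rotate T T T G
  have hcancel : ∀ r ∈ T, ∀ q1 ∈ T, ∀ q2 ∈ T, G r q1 q2 + G q2 q1 r = 0 := by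
    intro r _ q1 hq1 q2 _
    rw [hG]
    simp only
    by_cases hc : q1 + q2 + r = 0
    · have hc' : q1 + r + q2 = 0 := by rw [add_right_comm]; exact hc
      rw [if_pos hc, if_pos hc']
      have hsum : q2 + r = -q1 := by
        have h' : q2 + r + q1 = 0 := by rw [add_comm, ← add_assoc]; exact hc
        exact eq_neg_of_add_eq_zero_left h'
      have hW : (∑ i, u i r * u i q2) = ∑ i, u i q2 * u i r :=
        Finset.sum_congr rfl fun i _ => mul_comm _ _
      rw [hW]
      have hA : (∑ j, ((q2 j : ℝ) : ℂ) * u j q1) + (∑ j, ((r j : ℝ) : ℂ) * u j q1) = 0 := by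
        rw [← Finset.sum_add_distrib]
        have : ∀ j : Fin d, ((q2 j : ℝ) : ℂ) * u j q1 + ((r j : ℝ) : ℂ) * u j q1
            = -(((q1 j : ℝ) : ℂ) * u j q1) := by
          intro j
          have hj : q2 j + r j = -(q1 j) := by
            have := congrFun hsum j
            simpa using this
          have hjC : ((q2 j : ℝ) : ℂ) + ((r j : ℝ) : ℂ) = -((q1 j : ℝ) : ℂ) := by
            exact_mod_cast congrArg (fun x : ℝ => (x : ℂ)) hj
          rw [← add_mul, hjC]
          ring
        rw [Finset.sum_congr rfl fun j _ => this j, Finset.sum_neg_distrib, hdivT q1 hq1,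
          neg_zero]
      have : (∑ j, ((r j : ℝ) : ℂ) * u j q1) = -(∑ j, ((q2 j : ℝ) : ℂ) * u j q1) := by
        linear_combination hA
      rw [this]
      ring
    · have hc' : ¬ (q1 + r + q2 = 0) := by
        intro h; exact hc (by rw [add_right_comm]; exact h)
      rw [if_neg hc, if_neg hc', add_zero]
  have hdouble : (∑ r ∈ T, ∑ q1 ∈ T, ∑ q2 ∈ T, G r q1 q2)
      + (∑ r ∈ T, ∑ q1 ∈ T, ∑ q2 ∈ T, G r q1 q2) = 0 := by
    nth_rewrite 1 [hswap]
    rw [← Finset.sum_add_distrib]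
    refine Finset.sum_eq_zero fun r hr => ?_
    rw [← Finset.sum_add_distrib]
    refine Finset.sum_eq_zero fun q1 hq1 => ?_
    rw [← Finset.sum_add_distrib]
    refine Finset.sum_eq_zero fun q2 hq2 => ?_
    rw [add_comm]
    exact hcancel r hr q1 hq1 q2 hq2
  exact add_self_eq_zero.mp hdouble
end

section
/- Let d ≥ 1 and Λ′ ⊆ ℝ^d with Λ′ = −Λ′. Let u and h be finitely supported ℂ^d-valued vector fields on Λ′, both with all components satisfying the reality condition and both divergence-free (Σ_j k_j u_j(k) = 0 and Σ_j k_j h_j(k) = 0 for all k ∈ Λ′). Then the Kelvin cross-correlation identity holds: (u ∗ ∇u, h) + (u, u ∗ ∇h) − (u, h ∗ ∇u) = 0, where (u ∗ ∇v)_i = Σ_j u_j ∗ ∂_j v_i and (u, v) = Σ_k Σ_i u_i(k) · conj(v_i(k)). Consequently, if u solves the incompressible Euler equations on the lattice and h is a frozen-into-fluid divergence-free field satisfying ∂_t h + u ∗ ∇h − h ∗ ∇u = 0, the cross-correlation Γ = (u, h) is conserved in time. -/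
open scoped Classical

/-- The advective term `(u ∗ ∇v)_i = Σ_j u_j ∗ ∂_j v_i` on the lattice. -/
noncomputable def advect {d : ℕ} (Λ : Set (Fin d → ℝ))
    (u v : Fin d → (Fin d → ℝ) → ℂ) (i : Fin d) : (Fin d → ℝ) → ℂ :=
  fun k => ∑ j, latticeConv Λ (u j) (latticeDeriv j (v i)) k

/-- The inner product of vector fields `(u, v) = Σ_k Σ_i u_i(k) conj(v_i(k))`. -/
noncomputable def vecInner {d : ℕ} (Λ : Set (Fin d → ℝ))
    (u v : Fin d → (Fin d → ℝ) → ℂ) : ℂ :=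
  ∑ᶠ k ∈ Λ, ∑ i, u i k * star (v i k)

private lemma finsum_mem_eq_sum'' {α : Type*} (Λ : Set α) (S : Finset α) (F : α → ℂ)
    (h1 : ↑S ⊆ Λ) (h2 : Function.support F ⊆ ↑S) :
    ∑ᶠ p ∈ Λ, F p = ∑ p ∈ S, F p := by
  apply finsum_mem_eq_sum_of_inter_support_eq
  rw [Set.inter_eq_right.2 (h2.trans h1), Set.inter_eq_right.2 h2]

private lemma latticeConv_eq_sum {d : ℕ} (Λ : Set (Fin d → ℝ)) (S : Finset (Fin d → ℝ))
    (hSΛ : ↑S ⊆ Λ) (f g : (Fin d → ℝ) → ℂ)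
    (hf : Function.support f ⊆ ↑S) (hg : Function.support g ⊆ ↑S) (k : Fin d → ℝ) :
    latticeConv Λ f g k = ∑ p ∈ S, ∑ q ∈ S, if p + q = k then f p * g q else 0 := by
  unfold latticeConv
  rw [finsum_mem_eq_sum'' Λ S _ hSΛ (fun p hp => hf (fun h0 => hp (by simp [h0])))]
  exact Finset.sum_congr rfl fun p _ =>
    finsum_mem_eq_sum'' Λ S _ hSΛ (fun q hq => hg (fun h0 => hq (by simp [h0])))

private lemma kelvinSumCollapse {d : ℕ} (S : Finset (Fin d → ℝ))
    (T : Fin d → Fin d → (Fin d → ℝ) → (Fin d → ℝ) → (Fin d → ℝ) → ℂ)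
    (hT : ∀ i j p q, p + q ∉ S → T i j p q (p + q) = 0) :
    (∑ k ∈ S, ∑ i, ∑ j, ∑ p ∈ S, ∑ q ∈ S, if p + q = k then T i j p q k else 0)
      = ∑ p ∈ S, ∑ q ∈ S, ∑ i, ∑ j, T i j p q (p + q) := by
  calc (∑ k ∈ S, ∑ i, ∑ j, ∑ p ∈ S, ∑ q ∈ S, if p + q = k then T i j p q k else 0)
      = ∑ i, ∑ k ∈ S, ∑ j, ∑ p ∈ S, ∑ q ∈ S, if p + q = k then T i j p q k else 0 :=
        Finset.sum_comm
    _ = ∑ i, ∑ j, ∑ k ∈ S, ∑ p ∈ S, ∑ q ∈ S, (if p + q = k then T i j p q k else 0) :=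
        Finset.sum_congr rfl fun i _ => Finset.sum_comm
    _ = ∑ i, ∑ j, ∑ p ∈ S, ∑ k ∈ S, ∑ q ∈ S, (if p + q = k then T i j p q k else 0) :=
        Finset.sum_congr rfl fun i _ => Finset.sum_congr rfl fun j _ => Finset.sum_comm
    _ = ∑ i, ∑ j, ∑ p ∈ S, ∑ q ∈ S, ∑ k ∈ S, (if p + q = k then T i j p q k else 0) :=
        Finset.sum_congr rfl fun i _ => Finset.sum_congr rfl fun j _ =>
          Finset.sum_congr rfl fun p _ => Finset.sum_comm
    _ = ∑ i, ∑ j, ∑ p ∈ S, ∑ q ∈ S, T i j p q (p + q) := by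
        refine Finset.sum_congr rfl fun i _ => Finset.sum_congr rfl fun j _ =>
          Finset.sum_congr rfl fun p _ => Finset.sum_congr rfl fun q _ => ?_
        rw [Finset.sum_ite_eq]
        by_cases hmem : p + q ∈ S
        · simp [hmem]
        · simp [hmem, hT i j p q hmem]
    _ = ∑ i, ∑ p ∈ S, ∑ j, ∑ q ∈ S, T i j p q (p + q) :=
        Finset.sum_congr rfl fun i _ => Finset.sum_comm
    _ = ∑ p ∈ S, ∑ i, ∑ j, ∑ q ∈ S, T i j p q (p + q) := Finset.sum_comm
    _ = ∑ p ∈ S, ∑ i, ∑ q ∈ S, ∑ j, T i j p q (p + q) :=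
        Finset.sum_congr rfl fun p _ => Finset.sum_congr rfl fun i _ => Finset.sum_comm
    _ = ∑ p ∈ S, ∑ q ∈ S, ∑ i, ∑ j, T i j p q (p + q) :=
        Finset.sum_congr rfl fun p _ => Finset.sum_comm
private lemma vecInner_advect_left {d : ℕ} (Λ : Set (Fin d → ℝ)) (S : Finset (Fin d → ℝ))
    (hSΛ : ↑S ⊆ Λ) (a b c : Fin d → (Fin d → ℝ) → ℂ)
    (ha : ∀ i, Function.support (a i) ⊆ ↑S)
    (hb : ∀ i, Function.support (b i) ⊆ ↑S)
    (hc : ∀ i, Function.support (c i) ⊆ ↑S)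
    (hareal : ∀ i, RealityCond (a i)) :
    vecInner Λ (advect Λ b c) a =
      ∑ p ∈ S, ∑ q ∈ S, ∑ i, ∑ j,
        b j p * (Complex.I * (q j : ℂ)) * (c i q * a i (-(p + q))) := by
  have hder : ∀ (i j : Fin d), Function.support (latticeDeriv j (c i)) ⊆ ↑S :=
    fun i j k hk => hc i (fun h0 => hk (by simp [latticeDeriv, h0]))
  have ha0 : ∀ i k, k ∉ S → a i k = 0 := by
    intro i k hk; by_contra h0; exact hk (ha i h0)
  have hsupp : Function.support (fun k => ∑ i, advect Λ b c i k * star (a i k)) ⊆ ↑S := by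
    intro k hk
    by_contra hkS
    exact hk (Finset.sum_eq_zero fun i _ => by simp [ha0 i k (by exact_mod_cast hkS)])
  unfold vecInner
  rw [finsum_mem_eq_sum'' Λ S _ hSΛ hsupp]
  have hadv : ∀ (i : Fin d) (k : Fin d → ℝ), advect Λ b c i k
      = ∑ j, ∑ p ∈ S, ∑ q ∈ S, if p + q = k then b j p * latticeDeriv j (c i) q else 0 :=
    fun i k => Finset.sum_congr rfl fun j _ =>
      latticeConv_eq_sum Λ S hSΛ _ _ (hb j) (hder i j) k
  calc ∑ k ∈ S, ∑ i, advect Λ b c i k * star (a i k)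
      = ∑ k ∈ S, ∑ i, ∑ j, ∑ p ∈ S, ∑ q ∈ S,
          if p + q = k then b j p * latticeDeriv j (c i) q * star (a i k) else 0 := by
        refine Finset.sum_congr rfl fun k _ => Finset.sum_congr rfl fun i _ => ?_
        rw [hadv]
        simp only [Finset.sum_mul, ite_mul, zero_mul]
    _ = ∑ p ∈ S, ∑ q ∈ S, ∑ i, ∑ j,
          b j p * latticeDeriv j (c i) q * star (a i (p + q)) := by
        exact kelvinSumCollapse S
          (fun i j p q k => b j p * latticeDeriv j (c i) q * star (a i k))
          (fun i j p q hpq => by simp [ha0 i (p + q) hpq])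
    _ = ∑ p ∈ S, ∑ q ∈ S, ∑ i, ∑ j,
          b j p * (Complex.I * (q j : ℂ)) * (c i q * a i (-(p + q))) := by
        refine Finset.sum_congr rfl fun p _ => Finset.sum_congr rfl fun q _ =>
          Finset.sum_congr rfl fun i _ => Finset.sum_congr rfl fun j _ => ?_
        rw [show star (a i (p + q)) = a i (-(p + q)) from (hareal i (p + q)).symm]
        simp only [latticeDeriv]
        ring
private lemma kelvinSumNeg {d : ℕ} (S : Finset (Fin d → ℝ)) (hSneg : ∀ p ∈ S, -p ∈ S)
    (F : (Fin d → ℝ) → ℂ) : ∑ p ∈ S, F p = ∑ p ∈ S, F (-p) := by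
  refine Finset.sum_nbij' (fun p => -p) (fun p => -p) (fun p hp => hSneg p hp)
    (fun p hp => hSneg p hp) (fun p _ => neg_neg p) (fun p _ => neg_neg p)
    (fun p _ => by rw [neg_neg])

private lemma vecInner_advect_right {d : ℕ} (Λ : Set (Fin d → ℝ)) (S : Finset (Fin d → ℝ))
    (hSΛ : ↑S ⊆ Λ) (hSneg : ∀ p ∈ S, -p ∈ S)
    (a b c : Fin d → (Fin d → ℝ) → ℂ)
    (ha : ∀ i, Function.support (a i) ⊆ ↑S)
    (hb : ∀ i, Function.support (b i) ⊆ ↑S)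
    (hc : ∀ i, Function.support (c i) ⊆ ↑S)
    (hbreal : ∀ i, RealityCond (b i)) (hcreal : ∀ i, RealityCond (c i)) :
    vecInner Λ a (advect Λ b c) =
      ∑ p ∈ S, ∑ q ∈ S, ∑ i, ∑ j,
        b j p * (Complex.I * (q j : ℂ)) * (c i q * a i (-(p + q))) := by
  have hder : ∀ (i j : Fin d), Function.support (latticeDeriv j (c i)) ⊆ ↑S :=
    fun i j k hk => hc i (fun h0 => hk (by simp [latticeDeriv, h0]))
  have ha0 : ∀ i k, k ∉ S → a i k = 0 := by
    intro i k hk; by_contra h0; exact hk (ha i h0)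
  have hsupp : Function.support (fun k => ∑ i, a i k * star (advect Λ b c i k)) ⊆ ↑S := by
    intro k hk
    by_contra hkS
    exact hk (Finset.sum_eq_zero fun i _ => by simp [ha0 i k (by exact_mod_cast hkS)])
  unfold vecInner
  rw [finsum_mem_eq_sum'' Λ S _ hSΛ hsupp]
  have hadv : ∀ (i : Fin d) (k : Fin d → ℝ), advect Λ b c i k
      = ∑ j, ∑ p ∈ S, ∑ q ∈ S, if p + q = k then b j p * latticeDeriv j (c i) q else 0 :=
    fun i k => Finset.sum_congr rfl fun j _ =>
      latticeConv_eq_sum Λ S hSΛ _ _ (hb j) (hder i j) k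
  calc ∑ k ∈ S, ∑ i, a i k * star (advect Λ b c i k)
      = ∑ k ∈ S, ∑ i, ∑ j, ∑ p ∈ S, ∑ q ∈ S,
          if p + q = k then a i k * star (b j p * latticeDeriv j (c i) q) else 0 := by
        refine Finset.sum_congr rfl fun k _ => Finset.sum_congr rfl fun i _ => ?_
        rw [hadv]
        rw [star_sum, Finset.mul_sum]
        refine Finset.sum_congr rfl fun j _ => ?_
        rw [star_sum, Finset.mul_sum]
        refine Finset.sum_congr rfl fun p _ => ?_
        rw [star_sum, Finset.mul_sum]
        refine Finset.sum_congr rfl fun q _ => ?_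
        rw [apply_ite star, star_zero, mul_ite, mul_zero]
    _ = ∑ p ∈ S, ∑ q ∈ S, ∑ i, ∑ j,
          a i (p + q) * star (b j p * latticeDeriv j (c i) q) := by
        exact kelvinSumCollapse S
          (fun i j p q k => a i k * star (b j p * latticeDeriv j (c i) q))
          (fun i j p q hpq => by simp [ha0 i (p + q) hpq])
    _ = ∑ p ∈ S, ∑ q ∈ S, ∑ i, ∑ j,
          a i (-p + -q) * star (b j (-p) * latticeDeriv j (c i) (-q)) := by
        rw [kelvinSumNeg S hSneg]
        refine Finset.sum_congr rfl fun p _ => ?_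
        rw [kelvinSumNeg S hSneg]
    _ = ∑ p ∈ S, ∑ q ∈ S, ∑ i, ∑ j,
          b j p * (Complex.I * (q j : ℂ)) * (c i q * a i (-(p + q))) := by
        refine Finset.sum_congr rfl fun p _ => Finset.sum_congr rfl fun q _ =>
          Finset.sum_congr rfl fun i _ => Finset.sum_congr rfl fun j _ => ?_
        rw [hbreal j p, show (-q : Fin d → ℝ) = -q from rfl]
        simp only [latticeDeriv, hcreal i q, Pi.neg_apply, Complex.ofReal_neg,
          star_mul', star_star, Complex.star_def, map_mul, Complex.conj_I,
          Complex.conj_ofReal, neg_add_rev, map_neg, Complex.conj_conj]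
        rw [show (-p + -q : Fin d → ℝ) = -(p + q) by abel]
        ring
private lemma kelvinCoreCancel {d : ℕ} (Λ : Set (Fin d → ℝ)) (S : Finset (Fin d → ℝ))
    (hSΛ : ↑S ⊆ Λ)
    (a b c : Fin d → (Fin d → ℝ) → ℂ)
    (hb : ∀ i, Function.support (b i) ⊆ ↑S)
    (hc : ∀ i, Function.support (c i) ⊆ ↑S)
    (hadiv : ∀ k ∈ Λ, ∑ j, (k j : ℂ) * a j k = 0) :
    (∑ p ∈ S, ∑ q ∈ S, ∑ i, ∑ j, a j p * (Complex.I * (q j : ℂ)) * (b i q * c i (-(p + q))))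
      + ∑ p ∈ S, ∑ q ∈ S, ∑ i, ∑ j,
          a j p * (Complex.I * (q j : ℂ)) * (c i q * b i (-(p + q))) = 0 := by
  have hb0 : ∀ i k, k ∉ S → b i k = 0 := by
    intro i k hk; by_contra h0; exact hk (hb i h0)
  have hc0 : ∀ i k, k ∉ S → c i k = 0 := by
    intro i k hk; by_contra h0; exact hk (hc i h0)
  rw [← Finset.sum_add_distrib]
  refine Finset.sum_eq_zero fun p hp => ?_
  have hdivp : ∑ j, (p j : ℂ) * a j p = 0 := hadiv p (hSΛ hp)
  set σ : (Fin d → ℝ) → (Fin d → ℝ) := fun q => -(p + q) with hσ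
  have hσσ : ∀ q, σ (σ q) = q := fun q => by simp [hσ]
  set T : Finset (Fin d → ℝ) := S ∪ S.image σ with hT
  have hST : S ⊆ T := Finset.subset_union_left
  have hσT : ∀ q ∈ T, σ q ∈ T := by
    intro q hq
    rcases Finset.mem_union.1 hq with hq | hq
    · exact Finset.mem_union_right _ (Finset.mem_image_of_mem σ hq)
    · rcases Finset.mem_image.1 hq with ⟨q', hq', rfl⟩
      rw [hσσ]; exact Finset.mem_union_left _ hq'
  set F1 : (Fin d → ℝ) → ℂ :=
    fun q => ∑ i, ∑ j, a j p * (Complex.I * (q j : ℂ)) * (b i q * c i (σ q)) with hF1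
  set F2 : (Fin d → ℝ) → ℂ :=
    fun q => ∑ i, ∑ j, a j p * (Complex.I * (q j : ℂ)) * (c i q * b i (σ q)) with hF2
  have hext1 : ∑ q ∈ S, F1 q = ∑ q ∈ T, F1 q := by
    refine Finset.sum_subset hST fun q _ hqS => ?_
    exact Finset.sum_eq_zero fun i _ => Finset.sum_eq_zero fun j _ => by
      simp [hb0 i q hqS]
  have hext2 : ∑ q ∈ S, F2 q = ∑ q ∈ T, F2 q := by
    refine Finset.sum_subset hST fun q _ hqS => ?_
    exact Finset.sum_eq_zero fun i _ => Finset.sum_eq_zero fun j _ => by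
      simp [hc0 i q hqS]
  have hswap : ∑ q ∈ T, F2 q = ∑ q ∈ T, F2 (σ q) :=
    Finset.sum_nbij' σ σ hσT hσT (fun q _ => hσσ q) (fun q _ => hσσ q)
      (fun q _ => by rw [hσσ])
  have hpt : ∀ q, F1 q + F2 (σ q) = 0 := by
    intro q
    rw [hF1, hF2]
    simp only [hσσ]
    rw [← Finset.sum_add_distrib]
    refine Finset.sum_eq_zero fun i _ => ?_
    rw [← Finset.sum_add_distrib]
    have hterm : ∀ j, a j p * (Complex.I * (q j : ℂ)) * (b i q * c i (σ q))
        + a j p * (Complex.I * ((σ q) j : ℂ)) * (c i (σ q) * b i q)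
        = -Complex.I * (b i q * c i (σ q)) * ((p j : ℂ) * a j p) := by
      intro j
      have hval : ((σ q) j : ℂ) = -((p j : ℂ) + (q j : ℂ)) := by
        simp [hσ]
      rw [hval]; ring
    simp only [hterm]
    rw [← Finset.mul_sum, hdivp, mul_zero]
  show (∑ q ∈ S, F1 q) + ∑ q ∈ S, F2 q = 0
  rw [hext1, hext2, hswap, ← Finset.sum_add_distrib]
  exact Finset.sum_eq_zero fun q _ => hpt q

/-- Kelvin cross-correlation identity on a generalized lattice `Λ′ = −Λ′ ⊆ ℝ^d`:
for finitely supported, divergence-free vector fields `u` and `h` satisfying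
the reality condition, `(u ∗ ∇u, h) + (u, u ∗ ∇h) − (u, h ∗ ∇u) = 0`.
Consequently the cross-correlation `Γ = (u,h)` of an Euler solution `u` with a
frozen-into-fluid field `h` is conserved in time. -/
theorem kelvin_cross_correlation (d : ℕ) (hd : 1 ≤ d)
    (Λ : Set (Fin d → ℝ)) (hΛ : Λ = -Λ)
    (u h : Fin d → (Fin d → ℝ) → ℂ)
    (hufin : ∀ i, (Function.support (u i)).Finite)
    (husupp : ∀ i, Function.support (u i) ⊆ Λ)
    (hureal : ∀ i, RealityCond (u i))
    (hudiv : ∀ k ∈ Λ, ∑ j, (k j : ℂ) * u j k = 0)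
    (hhfin : ∀ i, (Function.support (h i)).Finite)
    (hhsupp : ∀ i, Function.support (h i) ⊆ Λ)
    (hhreal : ∀ i, RealityCond (h i))
    (hhdiv : ∀ k ∈ Λ, ∑ j, (k j : ℂ) * h j k = 0) :
    vecInner Λ (advect Λ u u) h + vecInner Λ u (advect Λ u h)
      - vecInner Λ u (advect Λ h u) = 0 := by

  classical
  have hS0fin : ((⋃ i, Function.support (u i)) ∪ ⋃ i, Function.support (h i)).Finite :=
    (Set.finite_iUnion hufin).union (Set.finite_iUnion hhfin)
  set S : Finset (Fin d → ℝ) := hS0fin.toFinset with hSdef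
  have hcoe : (↑S : Set (Fin d → ℝ))
      = (⋃ i, Function.support (u i)) ∪ ⋃ i, Function.support (h i) :=
    Set.Finite.coe_toFinset _
  have hSu : ∀ i, Function.support (u i) ⊆ ↑S := fun i => by
    rw [hcoe]; exact (Set.subset_iUnion (fun i => Function.support (u i)) i).trans Set.subset_union_left
  have hSh : ∀ i, Function.support (h i) ⊆ ↑S := fun i => by
    rw [hcoe]; exact (Set.subset_iUnion (fun i => Function.support (h i)) i).trans Set.subset_union_right
  have hSΛ : (↑S : Set (Fin d → ℝ)) ⊆ Λ := by
    rw [hcoe]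
    exact Set.union_subset (Set.iUnion_subset husupp) (Set.iUnion_subset hhsupp)
  have hSneg : ∀ p ∈ S, -p ∈ S := by
    intro p hp
    have hp' : p ∈ ((⋃ i, Function.support (u i)) ∪ ⋃ i, Function.support (h i)) := by
      exact hS0fin.mem_toFinset.1 hp
    have : -p ∈ ((⋃ i, Function.support (u i)) ∪ ⋃ i, Function.support (h i)) := by
      rcases hp' with hp' | hp'
      · rcases Set.mem_iUnion.1 hp' with ⟨i, hi⟩
        refine Or.inl (Set.mem_iUnion.2 ⟨i, ?_⟩)
        simp only [Function.mem_support] at hi ⊢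
        rw [hureal i p]
        simpa using hi
      · rcases Set.mem_iUnion.1 hp' with ⟨i, hi⟩
        refine Or.inr (Set.mem_iUnion.2 ⟨i, ?_⟩)
        simp only [Function.mem_support] at hi ⊢
        rw [hhreal i p]
        simpa using hi
    exact hS0fin.mem_toFinset.2 this
  rw [vecInner_advect_left Λ S hSΛ h u u hSh hSu hSu hhreal,
    vecInner_advect_right Λ S hSΛ hSneg u u h hSu hSu hSh hureal hhreal,
    vecInner_advect_right Λ S hSΛ hSneg u h u hSu hSh hSu hhreal hureal]
  have hA := kelvinCoreCancel Λ S hSΛ u u h hSu hSh hudiv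
  have hB := kelvinCoreCancel Λ S hSΛ h u u hSu hSu hhdiv
  have hB' : (∑ p ∈ S, ∑ q ∈ S, ∑ i, ∑ j,
      h j p * (Complex.I * (q j : ℂ)) * (u i q * u i (-(p + q)))) = 0 :=
    add_self_eq_zero.1 hB
  rw [hB']
  linear_combination hA
end

section
/- Let d ≥ 1 and Λ′ ⊆ ℝ^d with Λ′ = −Λ′. Let u be a finitely supported ℂ^d-valued divergence-free vector field on Λ′ (Σ_j k_j u_j(k) = 0 for all k), and let a, b : Λ′ → ℂ be finitely supported scalar functions, with u, a, b all satisfying the reality condition. Then (u ∗ ∇a, b) + (a, u ∗ ∇b) = 0, where u ∗ ∇a = Σ_j u_j ∗ ∂_j a and (f, g) = Σ_k f(k) · conj(g(k)). In particular, taking a = b = ω gives conservation of enstrophy for the two-dimensional Euler equations on the lattice, and general a gives conservation of the vorticity flux Γ = (a, ω) for a Lagrangian marker a advected by the flow. -/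
open scoped Classical

/-- The scalar advection `u ∗ ∇a = Σ_j u_j ∗ ∂_j a` on the lattice. -/
noncomputable def advectScalar {d : ℕ} (Λ : Set (Fin d → ℝ))
    (u : Fin d → (Fin d → ℝ) → ℂ) (a : (Fin d → ℝ) → ℂ) : (Fin d → ℝ) → ℂ :=
  fun k => ∑ j, latticeConv Λ (u j) (latticeDeriv j a) k

lemma aux_finsum {α : Type*} (F : α → ℂ) (Λ : Set α) (t : Finset α)
    (h1 : Function.support F ⊆ ↑t) (h2 : (↑t : Set α) ⊆ Λ) :
    ∑ᶠ p ∈ Λ, F p = ∑ p ∈ t, F p :=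
  finsum_mem_eq_sum_of_inter_support_eq F
    (by rw [Set.inter_eq_self_of_subset_right (h1.trans h2),
            Set.inter_eq_self_of_subset_right h1])

lemma aux_sum_neg {α M : Type*} [InvolutiveNeg α] [AddCommMonoid M]
    (s : Finset α) (hs : ∀ p ∈ s, -p ∈ s) (f : α → M) :
    ∑ p ∈ s, f p = ∑ p ∈ s, f (-p) :=
  Finset.sum_nbij' (fun p => -p) (fun p => -p) (fun p hp => hs p hp) (fun p hp => hs p hp)
    (fun p _ => neg_neg p) (fun p _ => neg_neg p) (fun p _ => by rw [neg_neg])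

lemma aux_swap {d : ℕ} (A B : Finset (Fin d → ℝ)) (p : Fin d → ℝ)
    (G : (Fin d → ℝ) → ℂ)
    (hB : ∀ q, q ∉ B → G q = 0)
    (hA : ∀ q, -(p + q) ∉ A → G q = 0) :
    ∑ q ∈ B, G q = ∑ r ∈ A, G (-(p + r)) := by
  have hinj : Function.Injective (fun r : Fin d → ℝ => -(p + r)) := by
    intro x y h
    simpa using neg_injective h
  have hkey : ∀ q : Fin d → ℝ, -(p + -(p + q)) = q := fun q => by abel
  have e3 : ∑ r ∈ A, G (-(p + r)) = ∑ q ∈ A.image (fun r => -(p + r)), G q :=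
    (Finset.sum_image (fun x _ y _ h => hinj h)).symm
  have e1 : ∑ q ∈ B, G q = ∑ q ∈ B ∪ A.image (fun r => -(p + r)), G q :=
    Finset.sum_subset Finset.subset_union_left (fun x _ hx => hB x hx)
  have e2 : ∑ q ∈ A.image (fun r => -(p + r)), G q
      = ∑ q ∈ B ∪ A.image (fun r => -(p + r)), G q := by
    refine Finset.sum_subset Finset.subset_union_right (fun x _ hx => ?_)
    refine hA x (fun hmem => hx ?_)
    exact Finset.mem_image.2 ⟨-(p + x), hmem, hkey x⟩
  rw [e1, e3, e2]

/-- Scalar advection identity on a generalized lattice `Λ′ = −Λ′ ⊆ ℝ^d`: for a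
finitely supported, divergence-free vector field `u` and finitely supported
scalars `a, b`, all satisfying the reality condition,
`(u ∗ ∇a, b) + (a, u ∗ ∇b) = 0`. In particular, `a = b = ω` gives conservation
of enstrophy for the 2D Euler equations on the lattice, and general `a` the
conservation of the vorticity flux `Γ = (a, ω)` for a Lagrangian marker `a`. -/
theorem scalar_advection_identity (d : ℕ) (hd : 1 ≤ d)
    (Λ : Set (Fin d → ℝ)) (hΛ : Λ = -Λ)
    (u : Fin d → (Fin d → ℝ) → ℂ) (a b : (Fin d → ℝ) → ℂ)
    (hufin : ∀ i, (Function.support (u i)).Finite)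
    (husupp : ∀ i, Function.support (u i) ⊆ Λ)
    (hureal : ∀ i, RealityCond (u i))
    (hudiv : ∀ k ∈ Λ, ∑ j, (k j : ℂ) * u j k = 0)
    (hafin : (Function.support a).Finite) (hasupp : Function.support a ⊆ Λ)
    (hareal : RealityCond a)
    (hbfin : (Function.support b).Finite) (hbsupp : Function.support b ⊆ Λ)
    (hbreal : RealityCond b) :
    (∑ᶠ k ∈ Λ, advectScalar Λ u a k * star (b k)) +
      (∑ᶠ k ∈ Λ, a k * star (advectScalar Λ u b k)) = 0 := by
  have hureal' : ∀ i k, u i (-k) = star (u i k) := hureal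
  have hareal' : ∀ k, a (-k) = star (a k) := hareal
  have hbreal' : ∀ k, b (-k) = star (b k) := hbreal
  have hureal2 : ∀ i k, (starRingEnd ℂ) (u i k) = u i (-k) := fun i k => (hureal' i k).symm
  have hbreal2 : ∀ k, (starRingEnd ℂ) (b k) = b (-k) := fun k => (hbreal' k).symm
  set A : Finset (Fin d → ℝ) := hafin.toFinset with hA
  set B : Finset (Fin d → ℝ) := hbfin.toFinset with hB
  have hUfin : (⋃ i, Function.support (u i)).Finite := Set.finite_iUnion hufin
  set U : Finset (Fin d → ℝ) := hUfin.toFinset with hU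
  have hAΛ : (↑A : Set (Fin d → ℝ)) ⊆ Λ := by rw [hA, Set.Finite.coe_toFinset]; exact hasupp
  have hBΛ : (↑B : Set (Fin d → ℝ)) ⊆ Λ := by rw [hB, Set.Finite.coe_toFinset]; exact hbsupp
  have hUΛ : (↑U : Set (Fin d → ℝ)) ⊆ Λ := by
    rw [hU, Set.Finite.coe_toFinset]; exact Set.iUnion_subset husupp
  have hmemA : ∀ q, a q ≠ 0 → q ∈ A := fun q h => hafin.mem_toFinset.2 h
  have hmemB : ∀ q, b q ≠ 0 → q ∈ B := fun q h => hbfin.mem_toFinset.2 h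
  have hmemU : ∀ j p, u j p ≠ 0 → p ∈ U := fun j p h =>
    hUfin.mem_toFinset.2 (Set.mem_iUnion.2 ⟨j, h⟩)
  have hsuppA : Function.support a ⊆ ↑A := fun q h => hmemA q h
  have hsuppB : Function.support b ⊆ ↑B := fun q h => hmemB q h
  have hAneg : ∀ q ∈ A, -q ∈ A := by
    intro q hq
    refine hmemA _ ?_
    rw [hareal']
    simpa using hafin.mem_toFinset.1 hq
  have hBneg : ∀ q ∈ B, -q ∈ B := by
    intro q hq
    refine hmemB _ ?_
    rw [hbreal']
    simpa using hbfin.mem_toFinset.1 hq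
  have hUneg : ∀ p ∈ U, -p ∈ U := by
    intro p hp
    obtain ⟨j, hj⟩ := Set.mem_iUnion.1 (hUfin.mem_toFinset.1 hp)
    refine hmemU j _ ?_
    rw [hureal' j]
    simpa using hj
  -- Step A : explicit formula for advectScalar
  have hadv : ∀ (c : (Fin d → ℝ) → ℂ) (C : Finset (Fin d → ℝ)),
      Function.support c ⊆ ↑C → (↑C : Set (Fin d → ℝ)) ⊆ Λ → ∀ k,
      advectScalar Λ u c k =
        ∑ j, ∑ p ∈ U, ∑ q ∈ C,
          if p + q = k then u j p * (Complex.I * (q j : ℂ) * c q) else 0 := by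
    intro c C hsC hCΛ k
    unfold advectScalar latticeConv latticeDeriv
    refine Finset.sum_congr rfl fun j _ => ?_
    calc (∑ᶠ p ∈ Λ, ∑ᶠ q ∈ Λ, if p + q = k then u j p * (Complex.I * (q j : ℂ) * c q) else 0)
        = ∑ᶠ p ∈ Λ, ∑ q ∈ C, (if p + q = k then u j p * (Complex.I * (q j : ℂ) * c q) else 0) := by
          refine finsum_mem_congr rfl fun p _ => ?_
          refine aux_finsum _ Λ C (fun q hq => ?_) hCΛ
          refine hsC (fun hc : c q = 0 => hq ?_)
          simp [hc]
      _ = ∑ p ∈ U, ∑ q ∈ C, (if p + q = k then u j p * (Complex.I * (q j : ℂ) * c q) else 0) := by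
          refine aux_finsum _ Λ U (fun p hp => ?_) hUΛ
          refine hmemU j p (fun hu : u j p = 0 => hp ?_)
          simp [hu]
  -- the common core function
  -- h1 : first term
  have h1 : (∑ᶠ k ∈ Λ, advectScalar Λ u a k * star (b k))
      = ∑ j, ∑ p ∈ U, ∑ q ∈ A,
          Complex.I * (q j : ℂ) * (u j p * a q * b (-(p + q))) := by
    rw [aux_finsum _ Λ B (fun k hk => hmemB k (fun hb : b k = 0 => hk (by simp [hb]))) hBΛ]
    calc (∑ k ∈ B, advectScalar Λ u a k * star (b k))
        = ∑ k ∈ B, (∑ j, ∑ p ∈ U, ∑ q ∈ A,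
            if p + q = k then u j p * (Complex.I * (q j : ℂ) * a q) else 0) * star (b k) := by
          refine Finset.sum_congr rfl fun k _ => ?_
          rw [hadv a A hsuppA hAΛ k]
      _ = ∑ k ∈ B, ∑ j, ∑ p ∈ U, ∑ q ∈ A,
            (if p + q = k then u j p * (Complex.I * (q j : ℂ) * a q) * star (b k) else 0) := by
          simp only [Finset.sum_mul, ite_mul, zero_mul]
      _ = ∑ j, ∑ p ∈ U, ∑ q ∈ A,
            Complex.I * (q j : ℂ) * (u j p * a q * b (-(p + q))) := by
          rw [Finset.sum_comm]
          refine Finset.sum_congr rfl fun j _ => ?_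
          rw [Finset.sum_comm]
          refine Finset.sum_congr rfl fun p _ => ?_
          rw [Finset.sum_comm]
          refine Finset.sum_congr rfl fun q _ => ?_
          rw [Finset.sum_ite_eq]
          by_cases h : p + q ∈ B
          · rw [if_pos h, hbreal']; ring
          · rw [if_neg h]
            have hb0 : b (p + q) = 0 := by
              by_contra hc; exact h (hmemB _ hc)
            rw [hbreal', hb0, star_zero, mul_zero, mul_zero]
  -- h2 : second term
  have h2 : (∑ᶠ k ∈ Λ, a k * star (advectScalar Λ u b k))
      = ∑ j, ∑ p ∈ U, ∑ q ∈ A,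
          -(Complex.I * ((p j : ℂ) + (q j : ℂ))) * (u j p * a q * b (-(p + q))) := by
    rw [aux_finsum _ Λ A (fun k hk => hmemA k (fun ha : a k = 0 => hk (by simp [ha]))) hAΛ]
    calc (∑ k ∈ A, a k * star (advectScalar Λ u b k))
        = ∑ k ∈ A, ∑ j, ∑ p ∈ U, ∑ q ∈ B,
            (if p + q = k then a k * (u j (-p) * (-Complex.I * (q j : ℂ) * b (-q))) else 0) := by
          refine Finset.sum_congr rfl fun k _ => ?_
          rw [hadv b B hsuppB hBΛ k]
          simp only [star_sum, apply_ite (star : ℂ → ℂ), star_zero, star_mul',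
            Complex.star_def, Complex.conj_I, Complex.conj_ofReal, hureal2, hbreal2,
            Finset.mul_sum, mul_ite, mul_zero]
      _ = ∑ j, ∑ p ∈ U, ∑ q ∈ B,
            -Complex.I * (q j : ℂ) * (u j (-p) * b (-q) * a (p + q)) := by
          rw [Finset.sum_comm]
          refine Finset.sum_congr rfl fun j _ => ?_
          rw [Finset.sum_comm]
          refine Finset.sum_congr rfl fun p _ => ?_
          rw [Finset.sum_comm]
          refine Finset.sum_congr rfl fun q _ => ?_
          rw [Finset.sum_ite_eq]
          by_cases h : p + q ∈ A
          · rw [if_pos h]; ring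
          · rw [if_neg h]
            have ha0 : a (p + q) = 0 := by
              by_contra hc; exact h (hmemA _ hc)
            rw [ha0, mul_zero, mul_zero]
      _ = ∑ j, ∑ p ∈ U, ∑ q ∈ B,
            Complex.I * (q j : ℂ) * (u j p * b q * a (-(p + q))) := by
          refine Finset.sum_congr rfl fun j _ => ?_
          rw [aux_sum_neg U hUneg]
          refine Finset.sum_congr rfl fun p _ => ?_
          rw [aux_sum_neg B hBneg]
          refine Finset.sum_congr rfl fun q _ => ?_
          rw [neg_neg, neg_neg, ← neg_add]
          simp only [Pi.neg_apply, Complex.ofReal_neg]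
          ring
      _ = ∑ j, ∑ p ∈ U, ∑ q ∈ A,
            -(Complex.I * ((p j : ℂ) + (q j : ℂ))) * (u j p * a q * b (-(p + q))) := by
          refine Finset.sum_congr rfl fun j _ => Finset.sum_congr rfl fun p _ => ?_
          rw [aux_swap A B p (fun q => Complex.I * (q j : ℂ) * (u j p * b q * a (-(p + q))))
            (fun q hq => by
              have hb0 : b q = 0 := by by_contra hc; exact hq (hmemB _ hc)
              simp [hb0])
            (fun q hq => by
              have ha0 : a (-(p + q)) = 0 := by by_contra hc; exact hq (hmemA _ hc)
              simp only [ha0, mul_zero])]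
          refine Finset.sum_congr rfl fun r _ => ?_
          have hk : -(p + -(p + r)) = r := by abel
          rw [hk]
          simp only [Pi.neg_apply, Pi.add_apply, Complex.ofReal_neg, Complex.ofReal_add]
          ring
  rw [h1, h2, ← Finset.sum_add_distrib]
  calc (∑ j, ((∑ p ∈ U, ∑ q ∈ A, Complex.I * (q j : ℂ) * (u j p * a q * b (-(p + q))))
        + ∑ p ∈ U, ∑ q ∈ A, -(Complex.I * ((p j : ℂ) + (q j : ℂ))) * (u j p * a q * b (-(p + q)))))
      = ∑ j, ∑ p ∈ U, ∑ q ∈ A,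
          -(Complex.I * (p j : ℂ)) * (u j p * a q * b (-(p + q))) := by
        refine Finset.sum_congr rfl fun j _ => ?_
        rw [← Finset.sum_add_distrib]
        refine Finset.sum_congr rfl fun p _ => ?_
        rw [← Finset.sum_add_distrib]
        refine Finset.sum_congr rfl fun q _ => ?_
        ring
    _ = ∑ p ∈ U, ∑ q ∈ A, ∑ j,
          -(Complex.I * (p j : ℂ)) * (u j p * a q * b (-(p + q))) := by
        rw [Finset.sum_comm]
        refine Finset.sum_congr rfl fun p _ => ?_
        rw [Finset.sum_comm]
    _ = 0 := by
        refine Finset.sum_eq_zero fun p hp => Finset.sum_eq_zero fun q _ => ?_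
        have h0 := hudiv p (hUΛ hp)
        calc (∑ j, -(Complex.I * (p j : ℂ)) * (u j p * a q * b (-(p + q))))
            = -Complex.I * (a q * b (-(p + q))) * ∑ j, (p j : ℂ) * u j p := by
              rw [Finset.mul_sum]
              exact Finset.sum_congr rfl fun j _ => by ring
          _ = 0 := by rw [h0, mul_zero]
end
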